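/- Let X ⊆ ℝ^d be a cone set with d ≥ 1, and fix θ ≠ 0. Suppose that for every pair of functions φ, ψ : X → ℝ that are homogeneous of degree θ and continuous and positive on the unit sphere S_X, there exist constants E, F > 0 with E·ψ(t) ≤ φ(t) ≤ F·ψ(t) for all t ∈ X \ {0}. Then S_X = {x ∈ X : |x| = 1} is compact. -/

import Mathlib

theorem stmt1 (d : ℕ) (hd : 1 ≤ d) (X : Set (EuclideanSpace ℝ (Fin d)))
    (hcone : ∀ x ∈ X, ∀ r : ℝ, 0 < r → r • x ∈ X)
    (θ : ℝ) (hθ : θ ≠ 0)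
    (hequiv : ∀ φ ψ : EuclideanSpace ℝ (Fin d) → ℝ,
      (∀ r : ℝ, 0 < r → ∀ x ∈ X, φ (r • x) = r ^ θ * φ x) →
      (∀ r : ℝ, 0 < r → ∀ x ∈ X, ψ (r • x) = r ^ θ * ψ x) →
      ContinuousOn φ {x | x ∈ X ∧ ‖x‖ = 1} →
      ContinuousOn ψ {x | x ∈ X ∧ ‖x‖ = 1} →
      (∀ x ∈ X, ‖x‖ = 1 → 0 < φ x) →
      (∀ x ∈ X, ‖x‖ = 1 → 0 < ψ x) →
      ∃ E F : ℝ, 0 < E ∧ 0 < F ∧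
        ∀ t ∈ X, t ≠ 0 → E * ψ t ≤ φ t ∧ φ t ≤ F * ψ t) :
    IsCompact {x : EuclideanSpace ℝ (Fin d) | x ∈ X ∧ ‖x‖ = 1} := by
  set S : Set (EuclideanSpace ℝ (Fin d)) := {x | x ∈ X ∧ ‖x‖ = 1} with hSdef
  have hSsub : S ⊆ Metric.sphere 0 1 := by
    intro x hx
    simpa [Metric.mem_sphere, dist_eq_norm] using hx.2
  refine IsCompact.of_isClosed_subset (isCompact_sphere 0 1) ?_ hSsub
  refine isClosed_of_closure_subset ?_
  intro y hy
  have hy1 : ‖y‖ = 1 := by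
    have : y ∈ Metric.sphere (0 : EuclideanSpace ℝ (Fin d)) 1 :=
      (Metric.isClosed_sphere).closure_subset ((closure_mono hSsub) hy)
    simpa [Metric.mem_sphere, dist_eq_norm] using this
  by_cases hyX : y ∈ X
  · exact ⟨hyX, hy1⟩
  exfalso
  -- define the two homogeneous functions
  set φ : EuclideanSpace ℝ (Fin d) → ℝ := fun x => ‖x‖ ^ θ with hφdef
  set ψ : EuclideanSpace ℝ (Fin d) → ℝ := fun x => ‖x‖ ^ θ * ‖‖x‖⁻¹ • x - y‖ with hψdef
  have hnorm_smul : ∀ (r : ℝ), 0 < r → ∀ x : EuclideanSpace ℝ (Fin d),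
      ‖r • x‖ ^ θ = r ^ θ * ‖x‖ ^ θ := by
    intro r hr x
    rw [norm_smul, Real.norm_of_nonneg hr.le, Real.mul_rpow hr.le (norm_nonneg x)]
  have hφhom : ∀ r : ℝ, 0 < r → ∀ x ∈ X, φ (r • x) = r ^ θ * φ x := by
    intro r hr x _
    exact hnorm_smul r hr x
  have hψhom : ∀ r : ℝ, 0 < r → ∀ x ∈ X, ψ (r • x) = r ^ θ * ψ x := by
    intro r hr x _
    by_cases hx : x = 0
    · simp [hψdef, hx, Real.zero_rpow hθ]
    · have hxn : (0:ℝ) < ‖x‖ := norm_pos_iff.2 hx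
      have hdir : ‖r • x‖⁻¹ • (r • x) = ‖x‖⁻¹ • x := by
        have hc : ‖r • x‖⁻¹ * r = ‖x‖⁻¹ := by
          rw [norm_smul, Real.norm_of_nonneg hr.le]
          field_simp
        rw [smul_smul, hc]
      simp only [hψdef, hdir, hnorm_smul r hr x, mul_assoc]
  have hSne : ∀ x ∈ S, x ≠ 0 := by
    intro x hx h0
    rw [h0] at hx
    simp [hSdef] at hx
  have hφcont : ContinuousOn φ S := by
    apply ContinuousOn.rpow_const continuous_norm.continuousOn
    intro x hx
    exact Or.inl (norm_ne_zero_iff.2 (hSne x hx))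
  have hdircont : ContinuousOn (fun x : EuclideanSpace ℝ (Fin d) => ‖x‖⁻¹ • x) S := by
    refine ContinuousOn.smul (?_ : ContinuousOn (fun x : EuclideanSpace ℝ (Fin d) => ‖x‖⁻¹) S) continuousOn_id
    exact ContinuousOn.inv₀ continuous_norm.continuousOn
      (fun x hx => norm_ne_zero_iff.2 (hSne x hx))
  have hψcont : ContinuousOn ψ S :=
    hφcont.mul ((hdircont.sub continuousOn_const).norm)
  have hφpos : ∀ x ∈ X, ‖x‖ = 1 → 0 < φ x := by
    intro x _ hx1
    simp [hφdef, hx1]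
  have hψpos : ∀ x ∈ X, ‖x‖ = 1 → 0 < ψ x := by
    intro x hxX hx1
    have hxy : x ≠ y := fun h => hyX (h ▸ hxX)
    simp only [hψdef, hx1, Real.one_rpow, inv_one, one_smul, one_mul]
    exact norm_pos_iff.2 (sub_ne_zero.2 hxy)
  obtain ⟨E, F, hE, hF, hEF⟩ := hequiv φ ψ hφhom hψhom hφcont hψcont hφpos hψpos
  -- y is in the closure of S, pick t ∈ S with ‖t - y‖ < F⁻¹
  rw [Metric.mem_closure_iff] at hy
  obtain ⟨t, htS, htd⟩ := hy F⁻¹ (by positivity)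
  have htX : t ∈ X := htS.1
  have ht1 : ‖t‖ = 1 := htS.2
  have ht0 : t ≠ 0 := hSne t htS
  have h2 := (hEF t htX ht0).2
  have hφt : φ t = 1 := by simp [hφdef, ht1]
  have hψt : ψ t = ‖t - y‖ := by
    simp [hψdef, ht1]
  rw [hφt, hψt] at h2
  have hlt : ‖t - y‖ < F⁻¹ := by
    have : dist y t = ‖t - y‖ := by rw [dist_comm, dist_eq_norm]
    linarith [this ▸ htd]
  have : F * ‖t - y‖ < F * F⁻¹ := by
    exact mul_lt_mul_of_pos_left hlt hF
  rw [mul_inv_cancel₀ (ne_of_gt hF)] at this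
  linarith
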